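/- arXiv:1709.07427 — 3 statements merged into one kernel-verified Lean document; each statement's English description precedes it below -/
import Mathlib

section
/- For every y > 0 and every nonzero integer n, 2π·∫_{−∞}^{∞} (H∇p₀(x,y)) · (∇pₙ(x,y)) dx = πn·(3y² − π²n²)/(y² + π²n²)³, where H is the rotation matrix sending (a,b) to (−b,a), p₀(x,y) = (1/π)·y/(x² + y²), and pₙ(x,y) = (1/π)·y/((x − 2πn)² + y²). -/
open Real MeasureTheory

/-- Poisson kernel for the upper half-plane with pole at `2 π n`. -/
noncomputable def p (n : ℤ) (x y : ℝ) : ℝ := (1 / π) * y / ((x - 2 * π * n) ^ 2 + y ^ 2)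

open Filter Topology

lemma hasDerivAt_F (y a : ℝ) (hy : 0 < y) (x : ℝ) :
    HasDerivAt (fun x : ℝ =>
      (1/π^2) * ((a^2-4*y^2)/(a^2+4*y^2)^2*(y/(x^2+y^2) - y/((x-a)^2+y^2))
        + 4*a*y/(a^2+4*y^2)^2*(x/(x^2+y^2) + (x-a)/((x-a)^2+y^2))
        + 2*(a^3-12*a*y^2)/(a^2+4*y^2)^3*(π - arctan (x/y) - arctan ((x-a)/y))
        - (6*a^2*y-8*y^3)/(a^2+4*y^2)^3*(Real.log (x^2+y^2) - Real.log ((x-a)^2+y^2))))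
      (2*y*a/π^2 * (x^2 - a*x + y^2) / ((x^2+y^2)^2 * ((x-a)^2+y^2)^2)) x := by
  have hx0 : (0:ℝ) < x^2+y^2 := by positivity
  have hx1 : (0:ℝ) < (x-a)^2+y^2 := by positivity
  have hR : (0:ℝ) < a^2+4*y^2 := by positivity
  have hπ : (π:ℝ) ≠ 0 := Real.pi_ne_zero
  have hyy : (0:ℝ) < 1+(x/y)^2 := by positivity
  have hyy2 : (0:ℝ) < 1+((x-a)/y)^2 := by positivity
  have hd0 : HasDerivAt (fun x : ℝ => x^2+y^2) (2*x) x := by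
    simpa using (hasDerivAt_pow 2 x).add_const (y^2)
  have hd1 : HasDerivAt (fun x : ℝ => (x-a)^2+y^2) (2*(x-a)) x := by
    simpa using (((hasDerivAt_id x).sub_const a).pow 2).add_const (y^2)
  have hA1 := (hasDerivAt_const x y).div hd0 hx0.ne'
  have hA2 := (hasDerivAt_const x y).div hd1 hx1.ne'
  have hB1 := (hasDerivAt_id' (x := x)).div hd0 hx0.ne'
  have hB2 := ((hasDerivAt_id x).sub_const a).div hd1 hx1.ne'
  have hC1 : HasDerivAt (fun x : ℝ => arctan (x/y)) (1/(1+(x/y)^2) * (1/y)) x :=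
    by simpa [Function.comp_def] using (Real.hasDerivAt_arctan (x/y)).comp x ((hasDerivAt_id x).div_const y)
  have hC2 : HasDerivAt (fun x : ℝ => arctan ((x-a)/y)) (1/(1+((x-a)/y)^2) * (1/y)) x :=
    by simpa [Function.comp_def] using (Real.hasDerivAt_arctan ((x-a)/y)).comp x (((hasDerivAt_id x).sub_const a).div_const y)
  have hL1 := hd0.log hx0.ne'
  have hL2 := hd1.log hx1.ne'
  have H := (((((hA1.sub hA2).const_mul ((a^2-4*y^2)/(a^2+4*y^2)^2)).add
      ((hB1.add hB2).const_mul (4*a*y/(a^2+4*y^2)^2))).add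
      ((((hasDerivAt_const x π).sub hC1).sub hC2).const_mul (2*(a^3-12*a*y^2)/(a^2+4*y^2)^3))).sub
      ((hL1.sub hL2).const_mul ((6*a^2*y-8*y^3)/(a^2+4*y^2)^3))).const_mul (1/π^2)
  convert H using 1
  · rfl
  · rfl
  · rfl
  simp only [id]
  field_simp
  ring

lemma tendsto_inv_atBot_zero''' : Tendsto (fun x : ℝ => x⁻¹) atBot (𝓝 0) := by
  have h := (tendsto_inv_atTop_zero (𝕜 := ℝ)).comp tendsto_neg_atBot_atTop
  have h2 := h.neg
  simp only [Function.comp_def, inv_neg, neg_neg] at h2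
  simpa using h2

lemma integrable_g (y a : ℝ) (hy : 0 < y) :
    Integrable (fun x : ℝ => 2*y*a/π^2 * (x^2 - a*x + y^2) / ((x^2+y^2)^2 * ((x-a)^2+y^2)^2)) := by
  set m := min 1 (y^2) with hm
  have hm0 : 0 < m := lt_min one_pos (by positivity)
  have h2y : (0:ℝ) < 2*y^2 := by positivity
  apply Integrable.mono' (g := fun x : ℝ =>
      (|2*y*a/π^2| * ((3*y^2+a^2)/(2*y^2)) / y^4 * (1/m)) * (1+x^2)⁻¹)
    (integrable_inv_one_add_sq.const_mul _)
  · apply Continuous.aestronglyMeasurable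
    exact Continuous.div (by fun_prop) (by fun_prop) (fun x => by positivity)
  · refine ae_of_all _ fun x => ?_
    have hx0 : (0:ℝ) < x^2+y^2 := by positivity
    have hx1 : (0:ℝ) < (x-a)^2+y^2 := by positivity
    have hN : |x^2-a*x+y^2| ≤ (3*y^2+a^2)/(2*y^2)*(x^2+y^2) := by
      rw [abs_le]
      constructor
      · rw [div_mul_eq_mul_div, neg_le, le_div_iff₀ h2y]
        nlinarith [sq_nonneg (x*y - a*y), sq_nonneg (x*y + a*y), sq_nonneg (a*x)]
      · rw [div_mul_eq_mul_div, le_div_iff₀ h2y]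
        nlinarith [sq_nonneg (x*y - a*y), sq_nonneg (x*y + a*y), sq_nonneg (a*x)]
    rw [Real.norm_eq_abs]
    calc |2*y*a/π^2 * (x^2-a*x+y^2) / ((x^2+y^2)^2*((x-a)^2+y^2)^2)|
        = |2*y*a/π^2| * |x^2-a*x+y^2| / ((x^2+y^2)^2*((x-a)^2+y^2)^2) := by
          rw [abs_div, abs_mul,
            abs_of_pos (show (0:ℝ) < (x^2+y^2)^2*((x-a)^2+y^2)^2 by positivity)]
      _ ≤ |2*y*a/π^2| * ((3*y^2+a^2)/(2*y^2)*(x^2+y^2)) / ((x^2+y^2)^2*(y^2)^2) := by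
          gcongr
          nlinarith [sq_nonneg (x-a)]
      _ = (|2*y*a/π^2| * ((3*y^2+a^2)/(2*y^2)) / y^4) * (1/(x^2+y^2)) := by
          field_simp
      _ ≤ (|2*y*a/π^2| * ((3*y^2+a^2)/(2*y^2)) / y^4) * ((1/m) * (1+x^2)⁻¹) := by
          have hb : m*(1+x^2) ≤ x^2+y^2 := by
            have h1 : m ≤ 1 := min_le_left _ _
            have h2 : m ≤ y^2 := min_le_right _ _
            nlinarith [sq_nonneg x]
          gcongr
          calc 1/(x^2+y^2) ≤ 1/(m*(1+x^2)) := by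
                  apply one_div_le_one_div_of_le (by positivity) hb
              _ = (1/m)*(1+x^2)⁻¹ := by rw [one_div, mul_inv, one_div]
      _ = (|2*y*a/π^2| * ((3*y^2+a^2)/(2*y^2)) / y^4 * (1/m)) * (1+x^2)⁻¹ := by ring



lemma key_integral (y a : ℝ) (hy : 0 < y) :
    ∫ x : ℝ, 2*y*a/π^2 * (x^2 - a*x + y^2) / ((x^2+y^2)^2 * ((x-a)^2+y^2)^2)
      = -(4*(a^3-12*a*y^2))/(π*(a^2+4*y^2)^3) := by
  have hπ : (π:ℝ) ≠ 0 := pi_ne_zero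
  set Ψ : ℝ → ℝ := fun t =>
    (1/π^2) * ((a^2-4*y^2)/(a^2+4*y^2)^2*(y*t^2/(1+y^2*t^2) - y*t^2/((1-a*t)^2+y^2*t^2))
      + 4*a*y/(a^2+4*y^2)^2*(t/(1+y^2*t^2) + (t-a*t^2)/((1-a*t)^2+y^2*t^2))
      - (6*a^2*y-8*y^3)/(a^2+4*y^2)^3*(Real.log ((1+y^2*t^2)/((1-a*t)^2+y^2*t^2)))) with hΨ
  have hΨc : ContinuousAt Ψ 0 := by
    apply ContinuousAt.mul continuousAt_const
    apply ContinuousAt.sub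
    apply ContinuousAt.add
    · exact continuousAt_const.mul ((ContinuousAt.div (by fun_prop) (by fun_prop)
        (by norm_num)).sub (ContinuousAt.div (by fun_prop) (by fun_prop) (by norm_num)))
    · exact continuousAt_const.mul ((ContinuousAt.div (by fun_prop) (by fun_prop)
        (by norm_num)).add (ContinuousAt.div (by fun_prop) (by fun_prop) (by norm_num)))
    · exact continuousAt_const.mul (ContinuousAt.log
        (ContinuousAt.div (by fun_prop) (by fun_prop) (by norm_num)) (by norm_num))
  have hΨ0 : Ψ 0 = 0 := by norm_num [hΨ]
  -- eventual equality off 0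
  have hev : ∀ x : ℝ, x ≠ 0 →
      Ψ x⁻¹ + (1/π^2)*(2*(a^3-12*a*y^2)/(a^2+4*y^2)^3*(π - arctan (x/y) - arctan ((x-a)/y)))
      = (1/π^2) * ((a^2-4*y^2)/(a^2+4*y^2)^2*(y/(x^2+y^2) - y/((x-a)^2+y^2))
        + 4*a*y/(a^2+4*y^2)^2*(x/(x^2+y^2) + (x-a)/((x-a)^2+y^2))
        + 2*(a^3-12*a*y^2)/(a^2+4*y^2)^3*(π - arctan (x/y) - arctan ((x-a)/y))
        - (6*a^2*y-8*y^3)/(a^2+4*y^2)^3*(Real.log (x^2+y^2) - Real.log ((x-a)^2+y^2))) := by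
    intro x hx
    have hx0 : (0:ℝ) < x^2+y^2 := by positivity
    have hx1 : (0:ℝ) < (x-a)^2+y^2 := by positivity
    have hpos1 : (0:ℝ) < 1+y^2*(x⁻¹)^2 := by positivity
    have hd2 : (1-a*x⁻¹)^2+y^2*(x⁻¹)^2 = ((x-a)^2+y^2)*(x⁻¹)^2 := by
      field_simp
    have hd2ne : ((1-a*x⁻¹)^2+y^2*(x⁻¹)^2) ≠ 0 := by
      rw [hd2]; positivity
    have harg : (1+y^2*(x⁻¹)^2)/((1-a*x⁻¹)^2+y^2*(x⁻¹)^2) = (x^2+y^2)/((x-a)^2+y^2) := by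
      rw [hd2, div_eq_div_iff (by positivity) (by positivity)]
      field_simp
    have e1 : y*(x⁻¹)^2/(1+y^2*(x⁻¹)^2) = y/(x^2+y^2) := by
      rw [div_eq_div_iff hpos1.ne' hx0.ne']; field_simp
    have e2 : y*(x⁻¹)^2/(((x-a)^2+y^2)*(x⁻¹)^2) = y/((x-a)^2+y^2) := by
      rw [div_eq_div_iff (by positivity) hx1.ne']; ring
    have e3 : (x⁻¹)/(1+y^2*(x⁻¹)^2) = x/(x^2+y^2) := by
      rw [div_eq_div_iff hpos1.ne' hx0.ne']; field_simp
    have e4 : (x⁻¹-a*(x⁻¹)^2)/(((x-a)^2+y^2)*(x⁻¹)^2) = (x-a)/((x-a)^2+y^2) := by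
      rw [div_eq_div_iff (by positivity) hx1.ne']; field_simp
    rw [hΨ]
    simp only
    rw [harg, Real.log_div hx0.ne' hx1.ne', hd2, e1, e2, e3, e4]
    ring
  have hbase : ∀ x : ℝ, x ≠ 0 → True := fun _ _ => trivial
  -- arctan limits
  have h1top : Tendsto (fun x : ℝ => arctan (x/y)) atTop (𝓝 (π/2)) :=
    (tendsto_nhds_of_tendsto_nhdsWithin tendsto_arctan_atTop).comp
      (Tendsto.atTop_div_const hy tendsto_id)
  have h1bot : Tendsto (fun x : ℝ => arctan (x/y)) atBot (𝓝 (-(π/2))) :=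
    (tendsto_nhds_of_tendsto_nhdsWithin tendsto_arctan_atBot).comp
      (Tendsto.atBot_div_const hy tendsto_id)
  have h2top : Tendsto (fun x : ℝ => arctan ((x-a)/y)) atTop (𝓝 (π/2)) := by
    have := (tendsto_nhds_of_tendsto_nhdsWithin tendsto_arctan_atTop).comp
      (Tendsto.atTop_div_const hy (tendsto_atTop_add_const_right atTop (-a) tendsto_id))
    simpa [sub_eq_add_neg, Function.comp_def] using this
  have h2bot : Tendsto (fun x : ℝ => arctan ((x-a)/y)) atBot (𝓝 (-(π/2))) := by
    have := (tendsto_nhds_of_tendsto_nhdsWithin tendsto_arctan_atBot).comp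
      (Tendsto.atBot_div_const hy (tendsto_atBot_add_const_right atBot (-a) tendsto_id))
    simpa [sub_eq_add_neg, Function.comp_def] using this
  have harc_top : Tendsto (fun x : ℝ =>
      (1/π^2)*(2*(a^3-12*a*y^2)/(a^2+4*y^2)^3*(π - arctan (x/y) - arctan ((x-a)/y))))
      atTop (𝓝 ((1/π^2)*(2*(a^3-12*a*y^2)/(a^2+4*y^2)^3*(π - π/2 - π/2)))) :=
    tendsto_const_nhds.mul (tendsto_const_nhds.mul
      ((tendsto_const_nhds.sub h1top).sub h2top))
  have harc_bot : Tendsto (fun x : ℝ =>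
      (1/π^2)*(2*(a^3-12*a*y^2)/(a^2+4*y^2)^3*(π - arctan (x/y) - arctan ((x-a)/y))))
      atBot (𝓝 ((1/π^2)*(2*(a^3-12*a*y^2)/(a^2+4*y^2)^3*(π - (-(π/2)) - (-(π/2)))))) :=
    tendsto_const_nhds.mul (tendsto_const_nhds.mul
      ((tendsto_const_nhds.sub h1bot).sub h2bot))
  have hrat_top : Tendsto (fun x : ℝ => Ψ x⁻¹) atTop (𝓝 0) := by
    have := hΨc.tendsto.comp tendsto_inv_atTop_zero
    rwa [hΨ0] at this
  have hrat_bot : Tendsto (fun x : ℝ => Ψ x⁻¹) atBot (𝓝 0) := by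
    have := hΨc.tendsto.comp tendsto_inv_atBot_zero'''
    rwa [hΨ0] at this
  have htop : Tendsto (fun x : ℝ =>
      (1/π^2) * ((a^2-4*y^2)/(a^2+4*y^2)^2*(y/(x^2+y^2) - y/((x-a)^2+y^2))
        + 4*a*y/(a^2+4*y^2)^2*(x/(x^2+y^2) + (x-a)/((x-a)^2+y^2))
        + 2*(a^3-12*a*y^2)/(a^2+4*y^2)^3*(π - arctan (x/y) - arctan ((x-a)/y))
        - (6*a^2*y-8*y^3)/(a^2+4*y^2)^3*(Real.log (x^2+y^2) - Real.log ((x-a)^2+y^2))))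
      atTop (𝓝 (0 + (1/π^2)*(2*(a^3-12*a*y^2)/(a^2+4*y^2)^3*(π - π/2 - π/2)))) := by
    apply (hrat_top.add harc_top).congr'
    filter_upwards [eventually_ne_atTop (0:ℝ)] with x hx
    exact hev x hx
  have hbot : Tendsto (fun x : ℝ =>
      (1/π^2) * ((a^2-4*y^2)/(a^2+4*y^2)^2*(y/(x^2+y^2) - y/((x-a)^2+y^2))
        + 4*a*y/(a^2+4*y^2)^2*(x/(x^2+y^2) + (x-a)/((x-a)^2+y^2))
        + 2*(a^3-12*a*y^2)/(a^2+4*y^2)^3*(π - arctan (x/y) - arctan ((x-a)/y))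
        - (6*a^2*y-8*y^3)/(a^2+4*y^2)^3*(Real.log (x^2+y^2) - Real.log ((x-a)^2+y^2))))
      atBot (𝓝 (0 + (1/π^2)*(2*(a^3-12*a*y^2)/(a^2+4*y^2)^3*(π - (-(π/2)) - (-(π/2)))))) := by
    apply (hrat_bot.add harc_bot).congr'
    filter_upwards [eventually_ne_atBot (0:ℝ)] with x hx
    exact hev x hx
  have hI := integral_of_hasDerivAt_of_tendsto (hasDerivAt_F y a hy)
    (integrable_g y a hy) hbot htop
  rw [hI]
  have hR : (0:ℝ) < a^2+4*y^2 := by positivity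
  field_simp
  ring


lemma deriv_p_fst (k : ℤ) (y : ℝ) (hy : 0 < y) (x : ℝ) :
    deriv (fun s => p k s y) x = -(2*y/π) * (x-2*π*k) / (((x-2*π*k)^2+y^2)^2) := by
  have hπ : (π:ℝ) ≠ 0 := pi_ne_zero
  have hpos : (0:ℝ) < (x-2*π*k)^2+y^2 := by positivity
  have hd : HasDerivAt (fun s : ℝ => (s-2*π*k)^2+y^2) (2*(x-2*π*k)) x := by
    simpa using (((hasDerivAt_id x).sub_const (2*π*k)).pow 2).add_const (y^2)
  have h := (hasDerivAt_const x (1/π*y)).div hd hpos.ne'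
  simp only [p]
  rw [show (fun s : ℝ => 1/π*y/((s-2*π*k)^2+y^2)) = (fun _ : ℝ => 1/π*y) / (fun s : ℝ => (s-2*π*k)^2+y^2) from rfl, h.deriv]
  field_simp
  ring
lemma deriv_p_snd (k : ℤ) (x y : ℝ) (hy : 0 < y) :
    deriv (fun t => p k x t) y = (1/π) * ((x-2*π*k)^2 - y^2) / (((x-2*π*k)^2+y^2)^2) := by
  have hπ : (π:ℝ) ≠ 0 := pi_ne_zero
  have hpos : (0:ℝ) < (x-2*π*k)^2+y^2 := by positivity
  have hnum : HasDerivAt (fun t : ℝ => 1/π*t) (1/π) y := by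
    simpa using (hasDerivAt_id y).const_mul (1/π)
  have hden : HasDerivAt (fun t : ℝ => (x-2*π*k)^2+t^2) (2*y) y := by
    simpa using (hasDerivAt_pow 2 y).const_add ((x-2*π*k)^2)
  have h := hnum.div hden hpos.ne'
  simp only [p]
  rw [show (fun t : ℝ => 1/π*t/((x-2*π*k)^2+t^2)) = (fun t : ℝ => 1/π*t) / (fun t : ℝ => (x-2*π*k)^2+t^2) from rfl, h.deriv]
  field_simp
  ring

theorem integral_Hgrad_p0_dot_grad_pn (y : ℝ) (hy : 0 < y) (n : ℤ) (hn : n ≠ 0) :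
    2 * π * ∫ x : ℝ,
        (-(deriv (fun t => p 0 x t) y) * deriv (fun s => p n s y) x
          + deriv (fun s => p 0 s y) x * deriv (fun t => p n x t) y)
      = π * n * (3 * y ^ 2 - π ^ 2 * n ^ 2) / (y ^ 2 + π ^ 2 * n ^ 2) ^ 3 := by
  have hπ : (0:ℝ) < π := pi_pos
  have hpt : ∀ x : ℝ,
      (-(deriv (fun t => p 0 x t) y) * deriv (fun s => p n s y) x
          + deriv (fun s => p 0 s y) x * deriv (fun t => p n x t) y)
      = 2*y*(2*π*(n:ℝ))/π^2 * (x^2 - (2*π*(n:ℝ))*x + y^2)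
          / ((x^2+y^2)^2 * ((x-(2*π*(n:ℝ)))^2+y^2)^2) := by
    intro x
    rw [deriv_p_fst 0 y hy x, deriv_p_fst n y hy x, deriv_p_snd 0 x y hy,
      deriv_p_snd n x y hy]
    simp only [Int.cast_zero, mul_zero, sub_zero]
    have hx0 : (0:ℝ) < x^2+y^2 := by positivity
    have hx1 : (0:ℝ) < (x-2*π*(n:ℝ))^2+y^2 := by positivity
    field_simp
    ring
  simp only [hpt]
  rw [key_integral y (2*π*(n:ℝ)) hy]
  have hden : (0:ℝ) < y^2 + π^2*(n:ℝ)^2 := by positivity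
  have hden2 : (0:ℝ) < (2*π*(n:ℝ))^2 + 4*y^2 := by positivity
  field_simp
  ring
end

section
/- For every y > 0 and every nonzero integer n, 2π·∫_{−∞}^{∞} pₙ(x,y)·∂_x p₀(x,y) dx = −πny/(y² + π²n²)². -/
open Real MeasureTheory Filter

/-- Tail limits of the log and rational parts of the antiderivative. -/
lemma aux_tails (a y d e : ℝ) (hy : 0 < y) {l : Filter ℝ}
    (hl : Tendsto (fun x : ℝ => x⁻¹) l (nhds 0)) (hne : ∀ᶠ x in l, x ≠ (0 : ℝ)) :
    Tendsto (fun x => Real.log ((x - a) ^ 2 + y ^ 2) - Real.log (x ^ 2 + y ^ 2)) l (nhds 0) ∧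
      Tendsto (fun x => (d * x + e) / (x ^ 2 + y ^ 2)) l (nhds 0) := by
  constructor
  · have hcont : ContinuousAt
        (fun u : ℝ => ((1 - a * u) ^ 2 + (y * u) ^ 2) / (1 + (y * u) ^ 2)) 0 := by
      apply ContinuousAt.div (by fun_prop) (by fun_prop) (by norm_num)
    have h2 : Tendsto (fun x : ℝ =>
        ((1 - a * x⁻¹) ^ 2 + (y * x⁻¹) ^ 2) / (1 + (y * x⁻¹) ^ 2)) l (nhds 1) := by
      have := hcont.tendsto.comp hl
      simpa [Function.comp_def] using this
    have h3 : Tendsto (fun x => ((x - a) ^ 2 + y ^ 2) / (x ^ 2 + y ^ 2)) l (nhds 1) := by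
      apply h2.congr'
      filter_upwards [hne] with x hx
      have hx2 : x ^ 2 + y ^ 2 ≠ 0 := by positivity
      field_simp
    have h4 : Tendsto (fun x => Real.log (((x - a) ^ 2 + y ^ 2) / (x ^ 2 + y ^ 2))) l
        (nhds 0) := by
      have := (Real.continuousAt_log one_ne_zero).tendsto.comp h3
      simpa [Function.comp_def] using this
    apply h4.congr
    intro x
    exact Real.log_div (by positivity) (by positivity)
  · have hcont : ContinuousAt
        (fun u : ℝ => (d * u + e * u ^ 2) / (1 + (y * u) ^ 2)) 0 := by
      apply ContinuousAt.div (by fun_prop) (by fun_prop) (by norm_num)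
    have h2 : Tendsto ((fun u : ℝ => (d * u + e * u ^ 2) / (1 + (y * u) ^ 2)) ∘
        fun x : ℝ => x⁻¹) l (nhds 0) := by
      simpa using hcont.tendsto.comp hl
    apply h2.congr'
    filter_upwards [hne] with x hx
    have hx2 : x ^ 2 + y ^ 2 ≠ 0 := by positivity
    simp only [Function.comp_apply]
    field_simp

set_option maxHeartbeats 4000000 in
theorem integral_pn_mul_dx_p0 (y : ℝ) (hy : 0 < y) (n : ℤ) (hn : n ≠ 0) :
    2 * π * ∫ x : ℝ, p n x y * deriv (fun s => p 0 s y) x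
      = -(π * n * y) / (y ^ 2 + π ^ 2 * n ^ 2) ^ 2 := by
  have hπ : (0 : ℝ) < π := Real.pi_pos
  have hn' : ((n : ℝ)) ≠ 0 := Int.cast_ne_zero.2 hn
  set a : ℝ := 2 * π * (n : ℝ) with ha
  have ha0 : a ≠ 0 := by
    rw [ha]; exact mul_ne_zero (mul_ne_zero two_ne_zero hπ.ne') hn'
  have hD : (0 : ℝ) < a ^ 2 + 4 * y ^ 2 := by positivity
  set f' : ℝ → ℝ := fun x => p n x y * deriv (fun s => p 0 s y) x with hf'def
  -- the explicit antiderivative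
  set F : ℝ → ℝ := fun x => (-2 * y ^ 2 / π ^ 2) *
      ((a / (y * (a ^ 2 + 4 * y ^ 2) ^ 2)) * (arctan ((x - a) / y) + arctan (x / y))
        + (-(3 * a ^ 2 + 4 * y ^ 2) / (2 * a ^ 2 * (a ^ 2 + 4 * y ^ 2) ^ 2)) *
            (Real.log ((x - a) ^ 2 + y ^ 2) - Real.log (x ^ 2 + y ^ 2))
        + ((-1 / (a * (a ^ 2 + 4 * y ^ 2))) * x + (-1 / (2 * (a ^ 2 + 4 * y ^ 2))))
            / (x ^ 2 + y ^ 2)) with hFdef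
  -- value of the derivative of `p 0 · y`
  have hp0fun : (fun s => p 0 s y) = fun s => 1 / π * y / (s ^ 2 + y ^ 2) := by
    funext s; simp [p]
  have hp0 : ∀ x : ℝ, HasDerivAt (fun s => p 0 s y)
      ((0 * (x ^ 2 + y ^ 2) - 1 / π * y * (2 * x)) / ((x ^ 2 + y ^ 2) ^ 2)) x := by
    intro x
    rw [hp0fun]
    have hden : x ^ 2 + y ^ 2 ≠ 0 := by positivity
    have hs : HasDerivAt (fun s : ℝ => s ^ 2 + y ^ 2) (2 * x) x := by
      simpa using ((hasDerivAt_id x).pow 2).add_const (y ^ 2)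
    exact (hasDerivAt_const x (1 / π * y)).div hs hden
  have hp0val : ∀ x : ℝ, deriv (fun s => p 0 s y) x
      = (0 * (x ^ 2 + y ^ 2) - 1 / π * y * (2 * x)) / ((x ^ 2 + y ^ 2) ^ 2) :=
    fun x => (hp0 x).deriv
  -- sign of the integrand
  have hsign : ∀ x : ℝ, 0 ≤ x → f' x ≤ 0 := by
    intro x hx
    show p n x y * deriv (fun s => p 0 s y) x ≤ 0
    rw [hp0val x]
    simp only [p]
    rw [← ha]
    have hQ : (0 : ℝ) < (x - a) ^ 2 + y ^ 2 := by positivity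
    apply mul_nonpos_of_nonneg_of_nonpos
    · positivity
    · apply div_nonpos_of_nonpos_of_nonneg
      · nlinarith [mul_nonneg (mul_nonneg (le_of_lt (by positivity : (0:ℝ) < 1 / π * y))
          (by norm_num : (0:ℝ) ≤ 2)) hx]
      · positivity
  have hsign' : ∀ x : ℝ, x ≤ 0 → 0 ≤ f' x := by
    intro x hx
    show 0 ≤ p n x y * deriv (fun s => p 0 s y) x
    rw [hp0val x]
    simp only [p]
    rw [← ha]
    have hQ : (0 : ℝ) < (x - a) ^ 2 + y ^ 2 := by positivity
    apply mul_nonneg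
    · positivity
    · apply div_nonneg
      · nlinarith [mul_nonpos_of_nonneg_of_nonpos
          (le_of_lt (by positivity : (0:ℝ) < 1 / π * y)) (by linarith : 2 * x ≤ 0)]
      · positivity
  -- the fundamental derivative identity
  have hF : ∀ x : ℝ, HasDerivAt F (f' x) x := by
    intro x
    have hQ : (0 : ℝ) < (x - a) ^ 2 + y ^ 2 := by positivity
    have hR : (0 : ℝ) < x ^ 2 + y ^ 2 := by positivity
    have h1 : HasDerivAt (fun x : ℝ => (x - a) / y) (1 / y) x := by
      simpa using ((hasDerivAt_id x).sub_const a).div_const y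
    have h2 := h1.arctan
    have h3 : HasDerivAt (fun x : ℝ => arctan (x / y)) (1 / (1 + (x / y) ^ 2) * (1 / y)) x := by
      have : HasDerivAt (fun x : ℝ => x / y) (1 / y) x := by
        simpa using (hasDerivAt_id x).div_const y
      exact this.arctan
    have hq : HasDerivAt (fun x : ℝ => (x - a) ^ 2 + y ^ 2) (2 * (x - a)) x := by
      simpa using (((hasDerivAt_id x).sub_const a).pow 2).add_const (y ^ 2)
    have hr : HasDerivAt (fun x : ℝ => x ^ 2 + y ^ 2) (2 * x) x := by
      simpa using ((hasDerivAt_id x).pow 2).add_const (y ^ 2)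
    have h4 := (hq.log hQ.ne').sub (hr.log hR.ne')
    have h5 : HasDerivAt (fun x : ℝ =>
        (-1 / (a * (a ^ 2 + 4 * y ^ 2))) * x + (-1 / (2 * (a ^ 2 + 4 * y ^ 2))))
        (-1 / (a * (a ^ 2 + 4 * y ^ 2))) x := by
      simpa using ((hasDerivAt_id x).const_mul (-1 / (a * (a ^ 2 + 4 * y ^ 2)))).add_const
        (-1 / (2 * (a ^ 2 + 4 * y ^ 2)))
    have h6 := h5.div hr hR.ne'
    have h7 := (((h2.add h3).const_mul (a / (y * (a ^ 2 + 4 * y ^ 2) ^ 2))).add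
        (h4.const_mul (-(3 * a ^ 2 + 4 * y ^ 2) / (2 * a ^ 2 * (a ^ 2 + 4 * y ^ 2) ^ 2)))).add h6
    have h8 := h7.const_mul (-2 * y ^ 2 / π ^ 2)
    rw [hFdef]
    refine h8.congr_deriv ?_
    symm
    rw [hf'def]
    beta_reduce
    rw [hp0val x]
    simp only [hp0val x, p]
    rw [← ha]
    have e1 : 1 + ((x - a) / y) ^ 2 ≠ 0 := by positivity
    have e2 : 1 + (x / y) ^ 2 ≠ 0 := by positivity
    field_simp
    ring
  -- limits at ±∞
  have hinvtop : Tendsto (fun x : ℝ => x⁻¹) atTop (nhds 0) := tendsto_inv_atTop_zero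
  have hinvbot : Tendsto (fun x : ℝ => x⁻¹) atBot (nhds 0) := by
    have h1 : Tendsto (fun x : ℝ => (-x)⁻¹) atBot (nhds 0) :=
      tendsto_inv_atTop_zero.comp tendsto_neg_atBot_atTop
    have := h1.neg
    simpa [Function.comp_def, inv_neg] using this
  obtain ⟨hlogT, hratT⟩ := aux_tails a y (-1 / (a * (a ^ 2 + 4 * y ^ 2)))
    (-1 / (2 * (a ^ 2 + 4 * y ^ 2))) hy hinvtop (eventually_ne_atTop 0)
  obtain ⟨hlogB, hratB⟩ := aux_tails a y (-1 / (a * (a ^ 2 + 4 * y ^ 2)))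
    (-1 / (2 * (a ^ 2 + 4 * y ^ 2))) hy hinvbot (eventually_ne_atBot 0)
  have harcT1 : Tendsto (fun x : ℝ => arctan ((x - a) / y)) atTop (nhds (π / 2)) := by
    have h0 : Tendsto (fun x : ℝ => (x - a) / y) atTop atTop := by
      apply Tendsto.atTop_div_const hy
      simpa [sub_eq_add_neg] using tendsto_atTop_add_const_right atTop (-a) tendsto_id
    exact (tendsto_arctan_atTop.mono_right nhdsWithin_le_nhds).comp h0
  have harcT2 : Tendsto (fun x : ℝ => arctan (x / y)) atTop (nhds (π / 2)) :=
    (tendsto_arctan_atTop.mono_right nhdsWithin_le_nhds).comp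
      (tendsto_id.atTop_div_const hy)
  have harcB1 : Tendsto (fun x : ℝ => arctan ((x - a) / y)) atBot (nhds (-(π / 2))) := by
    have h0 : Tendsto (fun x : ℝ => (x - a) / y) atBot atBot := by
      apply Tendsto.atBot_div_const hy
      simpa [sub_eq_add_neg] using tendsto_atBot_add_const_right atBot (-a) tendsto_id
    exact (tendsto_arctan_atBot.mono_right nhdsWithin_le_nhds).comp h0
  have harcB2 : Tendsto (fun x : ℝ => arctan (x / y)) atBot (nhds (-(π / 2))) :=
    (tendsto_arctan_atBot.mono_right nhdsWithin_le_nhds).comp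
      (tendsto_id.atBot_div_const hy)
  have htop : Tendsto F atTop (nhds ((-2 * y ^ 2 / π ^ 2) *
      ((a / (y * (a ^ 2 + 4 * y ^ 2) ^ 2)) * (π / 2 + π / 2)
        + (-(3 * a ^ 2 + 4 * y ^ 2) / (2 * a ^ 2 * (a ^ 2 + 4 * y ^ 2) ^ 2)) * 0 + 0))) := by
    rw [hFdef]
    exact ((((harcT1.add harcT2).const_mul _).add (hlogT.const_mul _)).add hratT).const_mul _
  have hbot : Tendsto F atBot (nhds ((-2 * y ^ 2 / π ^ 2) *
      ((a / (y * (a ^ 2 + 4 * y ^ 2) ^ 2)) * (-(π / 2) + -(π / 2))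
        + (-(3 * a ^ 2 + 4 * y ^ 2) / (2 * a ^ 2 * (a ^ 2 + 4 * y ^ 2) ^ 2)) * 0 + 0))) := by
    rw [hFdef]
    exact ((((harcB1.add harcB2).const_mul _).add (hlogB.const_mul _)).add hratB).const_mul _
  -- integrability
  have hIoi : IntegrableOn f' (Set.Ioi (0 : ℝ)) := by
    apply integrableOn_Ioi_deriv_of_nonpos' (fun x hx => hF x)
      (fun x hx => hsign x (le_of_lt hx)) htop
  have hIic : IntegrableOn f' (Set.Iic (0 : ℝ)) := by
    have hGd : ∀ x ∈ Set.Ici (0 : ℝ), HasDerivAt (fun x => -F (-x)) (f' (-x)) x := by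
      intro x _
      have := ((hF (-x)).comp x (hasDerivAt_neg x)).neg
      simp only [Function.comp_def, mul_neg, mul_one, neg_neg] at this
      exact this
    have hGpos : ∀ x ∈ Set.Ioi (0 : ℝ), 0 ≤ f' (-x) := fun x hx =>
      hsign' (-x) (by simp at hx ⊢; linarith)
    have hGtop : Tendsto (fun x => -F (-x)) atTop (nhds (-((-2 * y ^ 2 / π ^ 2) *
        ((a / (y * (a ^ 2 + 4 * y ^ 2) ^ 2)) * (-(π / 2) + -(π / 2))
          + (-(3 * a ^ 2 + 4 * y ^ 2) / (2 * a ^ 2 * (a ^ 2 + 4 * y ^ 2) ^ 2)) * 0 + 0)))) :=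
      (hbot.comp tendsto_neg_atTop_atBot).neg
    have h1 : IntegrableOn (fun x => f' (-x)) (Set.Ioi (0 : ℝ)) :=
      integrableOn_Ioi_deriv_of_nonneg' hGd hGpos hGtop
    have h2 : IntegrableOn (fun x => f' (-x)) (Set.Ici (0 : ℝ)) :=
      (integrableOn_Ici_iff_integrableOn_Ioi (by simp)).2 h1
    have hpre : (Neg.neg : ℝ → ℝ) ⁻¹' Set.Iic 0 = Set.Ici 0 := by
      ext x; simp
    refine ((Measure.measurePreserving_neg (volume : Measure ℝ)).integrableOn_comp_preimage
      (Homeomorph.neg ℝ).measurableEmbedding).1 ?_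
    rw [hpre]
    exact h2
  have hint : Integrable f' := by
    rw [← integrableOn_univ, ← Set.Iic_union_Ioi (a := (0 : ℝ)), integrableOn_union]
    exact ⟨hIic, hIoi⟩
  have key := integral_of_hasDerivAt_of_tendsto hF hint hbot htop
  rw [hf'def] at key
  rw [key, ha]
  have hyn : (y ^ 2 + π ^ 2 * (n : ℝ) ^ 2) ≠ 0 := by positivity
  field_simp
  ring
end

section
/- For x₀ = 0, y₀ ≥ 2πn with n a positive integer, and all x ∈ ℝ, y > 0 with y ≠ y₀: G(x,y)/pₙ(0,y₀) ≤ y·g(y/y₀), where G(x,y) = (1/(2π))·log((x² + (y+y₀)²)/(x² + (y−y₀)²)), pₙ(0,y₀) = (1/π)·y₀/((2πn)² + y₀²), and g(t) = t⁻¹·log(1 + 4t/(t−1)²). -/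
open Real

theorem green_ratio_bound (n : ℕ) (hn : 0 < n) (y₀ : ℝ) (hy₀ : 2 * π * n ≤ y₀)
    (x : ℝ) (y : ℝ) (hy : 0 < y) (hne : y ≠ y₀) :
    ((1 / (2 * π)) * Real.log ((x ^ 2 + (y + y₀) ^ 2) / (x ^ 2 + (y - y₀) ^ 2)))
        / ((1 / π) * y₀ / ((2 * π * n) ^ 2 + y₀ ^ 2))
      ≤ y * ((y / y₀)⁻¹ * Real.log (1 + 4 * (y / y₀) / (y / y₀ - 1) ^ 2)) := by
  have hπ : 0 < π := Real.pi_pos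
  have hn' : (1:ℝ) ≤ (n:ℝ) := by exact_mod_cast hn
  have hy₀pos : 0 < y₀ := by nlinarith
  have hsub : y - y₀ ≠ 0 := sub_ne_zero.mpr hne
  have hy₀ne : y₀ ≠ 0 := ne_of_gt hy₀pos
  have hyne : y ≠ 0 := ne_of_gt hy
  have hBpos : 0 < x ^ 2 + (y - y₀) ^ 2 := by positivity
  have hApos : 0 < x ^ 2 + (y + y₀) ^ 2 := by positivity
  have hb : (0:ℝ) < (y - y₀) ^ 2 := by positivity
  have ha : (0:ℝ) < (y + y₀) ^ 2 := by positivity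
  have hAB : (y - y₀) ^ 2 ≤ (y + y₀) ^ 2 := by nlinarith
  set L := Real.log ((x ^ 2 + (y + y₀) ^ 2) / (x ^ 2 + (y - y₀) ^ 2)) with hL
  set M := Real.log ((y + y₀) ^ 2 / (y - y₀) ^ 2) with hM
  have hLM : L ≤ M := by
    apply Real.log_le_log (by positivity)
    rw [div_le_div_iff₀ hBpos hb]
    nlinarith [sq_nonneg x]
  have hL0 : 0 ≤ L := by
    apply Real.log_nonneg
    rw [le_div_iff₀ hBpos]
    nlinarith
  have hM0 : 0 ≤ M := le_trans hL0 hLM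
  -- rewrite RHS
  have hRHS : y * ((y / y₀)⁻¹ * Real.log (1 + 4 * (y / y₀) / (y / y₀ - 1) ^ 2))
      = y₀ * M := by
    have harg : 1 + 4 * (y / y₀) / (y / y₀ - 1) ^ 2 = (y + y₀) ^ 2 / (y - y₀) ^ 2 := by
      have h2 : (y / y₀ - 1) ≠ 0 := by
        intro h
        apply hsub
        field_simp at h
        linarith
      field_simp
      ring
    rw [harg, ← hM]
    field_simp
  rw [hRHS]
  have hCpos : (0:ℝ) < (2 * π * n) ^ 2 + y₀ ^ 2 := by positivity
  have hC : (2 * π * n) ^ 2 + y₀ ^ 2 ≤ 2 * y₀ ^ 2 := by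
    nlinarith [mul_nonneg (sub_nonneg.mpr hy₀) (by positivity : (0:ℝ) ≤ y₀ + 2 * π * n)]
  have hPpos : 0 < (1 / π) * y₀ / ((2 * π * n) ^ 2 + y₀ ^ 2) := by positivity
  have key : ((2 * π * n) ^ 2 + y₀ ^ 2) * L ≤ 2 * y₀ ^ 2 * M := by
    nlinarith [mul_le_mul_of_nonneg_left hLM (le_of_lt hCpos)]
  rw [div_le_iff₀ hPpos,
    show y₀ * M * (1 / π * y₀ / ((2 * π * ↑n) ^ 2 + y₀ ^ 2))
      = y₀ ^ 2 * M / (π * ((2 * π * ↑n) ^ 2 + y₀ ^ 2)) from by field_simp,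
    div_mul_eq_mul_div, one_mul, div_le_div_iff₀ (by positivity) (by positivity)]
  nlinarith [mul_le_mul_of_nonneg_left key hπ.le]
end
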